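/- If I is a monotone and regular conditional indicator and I^L(X) = esssup_H{I(Y) : Y ∈ D_I, Y ≤ X}, then I^L is regular: I^L(X·1_A) = I^L(X)·1_A for all A ∈ H and all X ∈ L^0(ℝ̄,F). -/
import Mathlib


open MeasureTheory Filter Set
open scoped ENNReal Classical

noncomputable section

variable {Ω : Type*}

/-- `S` is the conditional essential supremum of the family `Γ` of extended-real-valued
random variables, given the sub-σ-algebra `m`: `S` is `m`-measurable, a.e. dominates every
member of `Γ`, and is minimal among `m`-measurable a.e. dominants. -/
def IsCondSup {F : MeasurableSpace Ω} (μ : Measure Ω) (m : MeasurableSpace Ω)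
    (Γ : Set (Ω → EReal)) (S : Ω → EReal) : Prop :=
  Measurable[m] S ∧ (∀ Y ∈ Γ, ∀ᵐ ω ∂μ, Y ω ≤ S ω) ∧
    ∀ T : Ω → EReal, Measurable[m] T → (∀ Y ∈ Γ, ∀ᵐ ω ∂μ, Y ω ≤ T ω) →
      ∀ᵐ ω ∂μ, S ω ≤ T ω

/-- `S` is the conditional essential infimum of the family `Γ` given `m`. -/
def IsCondInf {F : MeasurableSpace Ω} (μ : Measure Ω) (m : MeasurableSpace Ω)
    (Γ : Set (Ω → EReal)) (S : Ω → EReal) : Prop :=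
  Measurable[m] S ∧ (∀ Y ∈ Γ, ∀ᵐ ω ∂μ, S ω ≤ Y ω) ∧
    ∀ T : Ω → EReal, Measurable[m] T → (∀ Y ∈ Γ, ∀ᵐ ω ∂μ, T ω ≤ Y ω) →
      ∀ᵐ ω ∂μ, T ω ≤ S ω

/-- If `I` is a monotone and regular conditional indicator and
`I^L(X) = esssup_H {I(Y) : Y ∈ D_I, Y ≤ X}`, then `I^L` is regular:
`I^L(X·1_A) = I^L(X)·1_A` a.e. for all `A ∈ H` and all `X`. -/
theorem lower_extension_regular
    {F : MeasurableSpace Ω} (μ : Measure Ω) (H : MeasurableSpace Ω) (hH : H ≤ F)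
    (D : Set (Ω → EReal))
    (hDstable : ∀ X ∈ D, ∀ Z : Ω → EReal, Measurable[H] Z → X + Z ∈ D)
    (hHD : ∀ Z : Ω → EReal, Measurable[H] Z → Z ∈ D)
    (hdec : ∀ A : Set Ω, MeasurableSet[H] A → ∀ X ∈ D, ∀ Y ∈ D,
      (fun ω => if ω ∈ A then X ω else Y ω) ∈ D)
    (I : (Ω → EReal) → Ω → EReal)
    (hmeasI : ∀ X ∈ D, Measurable[H] (I X))
    (hbdd : ∀ X ∈ D, ∃ einf esup : Ω → EReal,
      IsCondInf μ H {X} einf ∧ IsCondSup μ H {X} esup ∧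
        ∀ᵐ ω ∂μ, einf ω ≤ I X ω ∧ I X ω ≤ esup ω)
    (hmono : ∀ X ∈ D, ∀ Y ∈ D, (∀ᵐ ω ∂μ, X ω ≤ Y ω) → ∀ᵐ ω ∂μ, I X ω ≤ I Y ω)
    (hreg : ∀ X ∈ D, ∀ A : Set Ω, MeasurableSet[H] A →
      I (A.indicator X) =ᵐ[μ] A.indicator (I X))
    (IL : (Ω → EReal) → Ω → EReal)
    (hIL : ∀ X : Ω → EReal,
      IsCondSup μ H {Z | ∃ Y ∈ D, (∀ᵐ ω ∂μ, Y ω ≤ X ω) ∧ Z = I Y} (IL X))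
    (X : Ω → EReal) (A : Set Ω) (hA : MeasurableSet[H] A) :
    IL (A.indicator X) =ᵐ[μ] A.indicator (IL X) := by
  obtain ⟨hILm, hILub, hILmin⟩ := hIL (A.indicator X)
  obtain ⟨hILXm, hILXub, hILXmin⟩ := hIL X
  have hAc : MeasurableSet[H] Aᶜ := hA.compl
  have hzero : (fun _ : Ω => (0 : EReal)) ∈ D := hHD _ measurable_const
  have hbot : (fun _ : Ω => (⊥ : EReal)) ∈ D := hHD _ measurable_const
  -- indicator preserves membership in D
  have hindD : ∀ Y ∈ D, ∀ B : Set Ω, MeasurableSet[H] B → B.indicator Y ∈ D := by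
    intro Y hY B hB
    have heq : B.indicator Y = fun ω => if ω ∈ B then Y ω else (fun _ : Ω => (0 : EReal)) ω := by
      funext ω; by_cases h : ω ∈ B <;> simp [h]
    rw [heq]; exact hdec B hB Y hY _ hzero
  -- I 0 ≥ 0 a.e.
  have hI0 : ∀ᵐ ω ∂μ, (0 : EReal) ≤ I (fun _ => 0) ω := by
    obtain ⟨einf, esup, hinf, _, hb⟩ := hbdd _ hzero
    have h0le : ∀ᵐ ω ∂μ, (0 : EReal) ≤ einf ω := by
      refine hinf.2.2 (fun _ => 0) measurable_const ?_
      rintro Y hY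
      rw [Set.mem_singleton_iff] at hY; subst hY
      filter_upwards with ω; exact le_refl _
    filter_upwards [h0le, hb] with ω h1 h2 using le_trans h1 h2.1
  -- Part A : IL (1_A X) ≤ 1_A (IL X) a.e.
  have upA : ∀ᵐ ω ∂μ, IL (A.indicator X) ω ≤ A.indicator (IL X) ω := by
    refine hILmin _ (hILXm.indicator hA) ?_
    rintro Z ⟨Y, hY, hYle, rfl⟩
    -- on Aᶜ, I Y ≤ 0 a.e.
    have hYcD : Aᶜ.indicator Y ∈ D := hindD Y hY Aᶜ hAc
    obtain ⟨einf, esup, _, hsup, hb⟩ := hbdd _ hYcD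
    have hle0 : ∀ᵐ ω ∂μ, Aᶜ.indicator Y ω ≤ 0 := by
      filter_upwards [hYle] with ω h
      by_cases hω : ω ∈ A
      · simp [Set.indicator_of_notMem, hω]
      · rw [Set.indicator_of_mem (by simpa using hω)]
        simpa [Set.indicator_of_notMem hω] using h
    have hsle : ∀ᵐ ω ∂μ, esup ω ≤ 0 := by
      refine hsup.2.2 (fun _ => 0) measurable_const ?_
      rintro W hW
      rw [Set.mem_singleton_iff] at hW; subst hW
      exact hle0
    have hIc0 : ∀ᵐ ω ∂μ, I (Aᶜ.indicator Y) ω ≤ 0 := by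
      filter_upwards [hsle, hb] with ω h1 h2 using le_trans h2.2 h1
    have hregc := hreg Y hY Aᶜ hAc
    -- on A : compare with Y' = Y on A, ⊥ off A
    set Y' : Ω → EReal := fun ω => if ω ∈ A then Y ω else (fun _ : Ω => (⊥ : EReal)) ω with hY'def
    have hY'D : Y' ∈ D := hdec A hA Y hY _ hbot
    have hY'le : ∀ᵐ ω ∂μ, Y' ω ≤ X ω := by
      filter_upwards [hYle] with ω h
      by_cases hω : ω ∈ A
      · simpa [hY'def, hω, Set.indicator_of_mem hω] using h
      · simp [hY'def, hω]
    have hIY' : ∀ᵐ ω ∂μ, I Y' ω ≤ IL X ω :=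
      hILXub (I Y') ⟨Y', hY'D, hY'le, rfl⟩
    have hindeq : A.indicator Y = A.indicator Y' := by
      funext ω; by_cases hω : ω ∈ A <;> simp [hY'def, hω]
    have hregA := hreg Y hY A hA
    have hregA' := hreg Y' hY'D A hA
    rw [hindeq] at hregA
    filter_upwards [hIc0, hregc, hregA, hregA', hIY'] with ω h0 hc hA1 hA2 hle
    by_cases hω : ω ∈ A
    · have e1 : I Y ω = A.indicator (I Y) ω := (Set.indicator_of_mem hω _).symm
      rw [e1, ← hA1, hA2, Set.indicator_of_mem hω, Set.indicator_of_mem hω]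
      exact hle
    · have hωc : ω ∈ Aᶜ := by simpa using hω
      have : I Y ω ≤ 0 := by
        rw [← Set.indicator_of_mem hωc (I Y), ← hc]; exact h0
      simpa [Set.indicator_of_notMem hω] using this
  -- Part B : 1_A (IL X) ≤ IL (1_A X) a.e.
  have upB : ∀ᵐ ω ∂μ, A.indicator (IL X) ω ≤ IL (A.indicator X) ω := by
    -- nonnegativity of IL(1_A X) on Aᶜ
    set Y0 : Ω → EReal := A.indicator (fun _ => (⊥ : EReal)) with hY0def
    have hY0D : Y0 ∈ D := hHD _ (measurable_const.indicator hA)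
    have hY0le : ∀ᵐ ω ∂μ, Y0 ω ≤ A.indicator X ω := by
      filter_upwards with ω
      by_cases hω : ω ∈ A
      · simp [hY0def, Set.indicator_of_mem hω]
      · simp [hY0def, Set.indicator_of_notMem hω]
    have hIY0 : ∀ᵐ ω ∂μ, I Y0 ω ≤ IL (A.indicator X) ω :=
      hILub (I Y0) ⟨Y0, hY0D, hY0le, rfl⟩
    have hY0c : Aᶜ.indicator Y0 = (fun _ : Ω => (0 : EReal)) := by
      funext ω; by_cases hω : ω ∈ A <;>
        simp [hY0def, Set.indicator_apply, hω]
    have hreg0 := hreg Y0 hY0D Aᶜ hAc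
    rw [hY0c] at hreg0
    have hnonneg : ∀ᵐ ω ∂μ, ω ∈ Aᶜ → (0 : EReal) ≤ IL (A.indicator X) ω := by
      filter_upwards [hI0, hreg0, hIY0] with ω h0 hr hle hω
      have : (0 : EReal) ≤ Aᶜ.indicator (I Y0) ω := hr ▸ h0
      rw [Set.indicator_of_mem hω] at this
      exact le_trans this hle
    -- IL X ≤ T a.e. where T = IL(1_A X) on A, ⊤ off A
    set T : Ω → EReal := fun ω => if ω ∈ A then IL (A.indicator X) ω else (⊤ : EReal) with hTdef
    have hTm : Measurable[H] T := Measurable.ite hA hILm measurable_const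
    have hXT : ∀ᵐ ω ∂μ, IL X ω ≤ T ω := by
      refine hILXmin T hTm ?_
      rintro Z ⟨Y, hY, hYle, rfl⟩
      have hYA : A.indicator Y ∈ D := hindD Y hY A hA
      have hYAle : ∀ᵐ ω ∂μ, A.indicator Y ω ≤ A.indicator X ω := by
        filter_upwards [hYle] with ω h
        by_cases hω : ω ∈ A <;> simp [Set.indicator_apply, hω, h]
      have hIYA : ∀ᵐ ω ∂μ, I (A.indicator Y) ω ≤ IL (A.indicator X) ω :=
        hILub (I (A.indicator Y)) ⟨A.indicator Y, hYA, hYAle, rfl⟩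
      have hregA := hreg Y hY A hA
      filter_upwards [hIYA, hregA] with ω h1 h2
      by_cases hω : ω ∈ A
      · have : I Y ω = I (A.indicator Y) ω := by
          rw [h2, Set.indicator_of_mem hω]
        rw [hTdef]; simp only [hω, if_true]
        exact this ▸ h1
      · rw [hTdef]; simp [hω]
    filter_upwards [hXT, hnonneg] with ω h1 h2
    by_cases hω : ω ∈ A
    · rw [Set.indicator_of_mem hω]
      have := h1
      rw [hTdef] at this; simp only [hω, if_true] at this
      exact this
    · rw [Set.indicator_of_notMem hω]
      exact h2 (by simpa using hω)
  filter_upwards [upA, upB] with ω h1 h2 using le_antisymm h1 h2
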